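/- arXiv:2004.07262 — 3 statements merged into one kernel-verified Lean document; each statement's English description precedes it below -/
import Mathlib

section
/- Let A ∈ ℤ^{d×n} be full and pointed with all columns nonzero. A prime ideal P of ℂ[x₁,…,xₙ] is A-graded and contains the toric ideal I_A if and only if P = I_A^τ for some face τ of the cone ℝ≥0A; moreover distinct faces τ ≠ τ′ give distinct ideals I_A^τ ≠ I_A^{τ′}. Hence the faces of ℝ≥0A are in one-to-one correspondence with the A-graded prime ideals of ℂ[x₁,…,xₙ] containing I_A. -/
open MvPolynomial

/-- The `j`-th column of the integer matrix `A`. -/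
def matCol {d n : ℕ} (A : Matrix (Fin d) (Fin n) ℤ) (j : Fin n) : Fin d → ℤ := fun i => A i j

/-- The semigroup `ℕA ⊆ ℤ^d` generated by the columns of `A`. -/
def semigroupNA {d n : ℕ} (A : Matrix (Fin d) (Fin n) ℤ) : Set (Fin d → ℤ) :=
  {v | ∃ c : Fin n → ℕ, v = ∑ j, c j • matCol A j}

/-- `A` is full: the columns generate all of `ℤ^d` as a group. -/
def IsFull {d n : ℕ} (A : Matrix (Fin d) (Fin n) ℤ) : Prop :=
  ∀ v : Fin d → ℤ, ∃ c : Fin n → ℤ, v = ∑ j, c j • matCol A j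

/-- `A` is pointed: the only unit of the semigroup `ℕA` is `0`. -/
def IsPointed {d n : ℕ} (A : Matrix (Fin d) (Fin n) ℤ) : Prop :=
  ∀ v ∈ semigroupNA A, -v ∈ semigroupNA A → v = 0

/-- The `j`-th column of `A`, viewed in `ℝ^d`. -/
def matColR {d n : ℕ} (A : Matrix (Fin d) (Fin n) ℤ) (j : Fin n) : Fin d → ℝ :=
  fun i => (A i j : ℝ)

/-- A face of the cone `ℝ≥0 A`, identified with the subset of column indices
on which some nonnegative supporting linear functional vanishes. -/
def IsFace {d n : ℕ} (A : Matrix (Fin d) (Fin n) ℤ) (τ : Set (Fin n)) : Prop :=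
  ∃ φ : (Fin d → ℝ) →ₗ[ℝ] ℝ, (∀ j, 0 ≤ φ (matColR A j)) ∧ τ = {j | φ (matColR A j) = 0}

/-- The toric ideal `I_A ⊆ ℂ[x₁,…,xₙ]`, generated by the binomials
`x^{u₊} - x^{u₋}` for `u` in the integer kernel of `A`. -/
noncomputable def toricIdeal {d n : ℕ} (A : Matrix (Fin d) (Fin n) ℤ) :
    Ideal (MvPolynomial (Fin n) ℂ) :=
  Ideal.span {p | ∃ u : Fin n → ℤ, (∀ i, ∑ j, A i j * u j = 0) ∧
    p = monomial (Finsupp.equivFunOnFinite.symm fun j => (u j).toNat) 1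
      - monomial (Finsupp.equivFunOnFinite.symm fun j => (-u j).toNat) 1}

/-- The ideal `I_A^τ`, generated by `I_A` together with the variables `x_j`, `j ∉ τ`. -/
noncomputable def toricFaceIdeal {d n : ℕ} (A : Matrix (Fin d) (Fin n) ℤ) (τ : Set (Fin n)) :
    Ideal (MvPolynomial (Fin n) ℂ) :=
  toricIdeal A ⊔ Ideal.span {p | ∃ j ∉ τ, p = X j}

/-- The `A`-degree of an exponent vector: `deg x_j = a_j`. -/
def adeg {d n : ℕ} (A : Matrix (Fin d) (Fin n) ℤ) (e : Fin n →₀ ℕ) : Fin d → ℤ :=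
  fun i => ∑ j, (e j : ℤ) * A i j

open Classical in
/-- The `A`-graded component of a polynomial `p` in `A`-degree `b`. -/
noncomputable def gradePiece {d n : ℕ} (A : Matrix (Fin d) (Fin n) ℤ)
    (p : MvPolynomial (Fin n) ℂ) (b : Fin d → ℤ) : MvPolynomial (Fin n) ℂ :=
  ∑ e ∈ p.support.filter (fun e => adeg A e = b), monomial e (coeff e p)

/-- An ideal is `A`-graded if it contains all `A`-graded components of its elements. -/
def IsAGraded {d n : ℕ} (A : Matrix (Fin d) (Fin n) ℤ)
    (P : Ideal (MvPolynomial (Fin n) ℂ)) : Prop :=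
  ∀ p ∈ P, ∀ b : Fin d → ℤ, gradePiece A p b ∈ P

section Auxiliary

open Matrix Classical

/-! ### Farkas lemma over ℚ -/

lemma farkasQ {d : ℕ} : ∀ (m : ℕ) (b : Fin m → (Fin d → ℚ)) (c : Fin d → ℚ),
    (¬ ∃ l : Fin m → ℚ, (∀ i, 0 ≤ l i) ∧ c = ∑ i, l i • b i) →
    ∃ w : Fin d → ℚ, (∀ i, 0 ≤ w ⬝ᵥ b i) ∧ w ⬝ᵥ c < 0 := by
  intro m
  induction m with
  | zero =>
    intro b c h
    have hc : c ≠ 0 := by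
      rintro rfl
      exact h ⟨0, fun i => le_rfl, by simp⟩
    refine ⟨-c, fun i => i.elim0, ?_⟩
    have h1 : c ⬝ᵥ c ≠ 0 := fun h0 => hc (dotProduct_self_eq_zero.mp h0)
    have h2 : 0 ≤ c ⬝ᵥ c := by
      simpa [dotProduct] using Finset.sum_nonneg (fun i (_ : i ∈ Finset.univ) => mul_self_nonneg (c i))
    have : 0 < c ⬝ᵥ c := lt_of_le_of_ne h2 (Ne.symm h1)
    simpa [neg_dotProduct] using this
  | succ m ih =>
    intro b c h
    have h' : ¬ ∃ l : Fin m → ℚ, (∀ i, 0 ≤ l i) ∧ c = ∑ i, l i • b i.castSucc := by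
      rintro ⟨l, hl, rfl⟩
      refine h ⟨Fin.snoc l 0, ?_, ?_⟩
      · intro i
        refine Fin.lastCases ?_ (fun i => ?_) i <;> simp [hl]
      · rw [Fin.sum_univ_castSucc]
        simp
    obtain ⟨w, hw, hwc⟩ := ih (fun i => b i.castSucc) c h'
    by_cases hwL : 0 ≤ w ⬝ᵥ b (Fin.last m)
    · exact ⟨w, fun i => Fin.lastCases hwL hw i, hwc⟩
    · push_neg at hwL
      have htne : w ⬝ᵥ b (Fin.last m) ≠ 0 := ne_of_lt hwL
      have key : ¬ ∃ l : Fin m → ℚ, (∀ i, 0 ≤ l i) ∧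
          (c - (w ⬝ᵥ c / (w ⬝ᵥ b (Fin.last m))) • b (Fin.last m)) =
            ∑ i, l i • (b i.castSucc -
              (w ⬝ᵥ b i.castSucc / (w ⬝ᵥ b (Fin.last m))) • b (Fin.last m)) := by
        rintro ⟨l, hl, heq⟩
        set mu : ℚ := (w ⬝ᵥ c - ∑ i, l i * (w ⬝ᵥ b i.castSucc)) / (w ⬝ᵥ b (Fin.last m)) with hmu
        have hmupos : 0 < mu := by
          apply div_pos_of_neg_of_neg _ hwL
          have h0 : 0 ≤ ∑ i, l i * (w ⬝ᵥ b i.castSucc) :=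
            Finset.sum_nonneg (fun i _ => mul_nonneg (hl i) (hw i))
          linarith
        have hc : c = ∑ i, l i • b i.castSucc + mu • b (Fin.last m) := by
          have h1 : c = (∑ i, l i • (b i.castSucc -
              (w ⬝ᵥ b i.castSucc / (w ⬝ᵥ b (Fin.last m))) • b (Fin.last m)))
              + (w ⬝ᵥ c / (w ⬝ᵥ b (Fin.last m))) • b (Fin.last m) := by
            rw [← heq]; abel
          rw [h1]
          simp only [smul_sub, Finset.sum_sub_distrib, smul_smul, ← Finset.sum_smul]
          have hmueq : mu • b (Fin.last m) =
              (w ⬝ᵥ c / (w ⬝ᵥ b (Fin.last m))) • b (Fin.last m) -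
              (∑ i, l i * (w ⬝ᵥ b i.castSucc / (w ⬝ᵥ b (Fin.last m)))) • b (Fin.last m) := by
            rw [← sub_smul]
            congr 1
            rw [hmu, sub_div, Finset.sum_div]
            congr 1
            exact Finset.sum_congr rfl fun i _ => mul_div_assoc _ _ _
          rw [hmueq]
          abel
        apply h
        refine ⟨Fin.snoc l mu, fun i => ?_, ?_⟩
        · refine Fin.lastCases ?_ (fun i => ?_) i <;> simp [hl, le_of_lt hmupos]
        · rw [Fin.sum_univ_castSucc]
          simpa using hc
      obtain ⟨w', hw', hw'c⟩ := ih
        (fun i => b i.castSucc - (w ⬝ᵥ b i.castSucc / (w ⬝ᵥ b (Fin.last m))) • b (Fin.last m))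
        (c - (w ⬝ᵥ c / (w ⬝ᵥ b (Fin.last m))) • b (Fin.last m)) key
      refine ⟨w' - (w' ⬝ᵥ b (Fin.last m) / (w ⬝ᵥ b (Fin.last m))) • w, fun i => ?_, ?_⟩
      · refine Fin.lastCases ?_ (fun i => ?_) i
        · rw [sub_dotProduct, smul_dotProduct, smul_eq_mul, div_mul_cancel₀ _ htne, sub_self]
        · have h2 := hw' i
          rw [dotProduct_sub, dotProduct_smul, smul_eq_mul] at h2
          rw [sub_dotProduct, smul_dotProduct, smul_eq_mul]
          have hprod : (w ⬝ᵥ b i.castSucc / (w ⬝ᵥ b (Fin.last m))) * (w' ⬝ᵥ b (Fin.last m)) =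
              (w' ⬝ᵥ b (Fin.last m) / (w ⬝ᵥ b (Fin.last m))) * (w ⬝ᵥ b i.castSucc) := by
            field_simp
          linarith [h2, hprod]
      · rw [dotProduct_sub, dotProduct_smul, smul_eq_mul] at hw'c
        rw [sub_dotProduct, smul_dotProduct, smul_eq_mul]
        have hprod : (w ⬝ᵥ c / (w ⬝ᵥ b (Fin.last m))) * (w' ⬝ᵥ b (Fin.last m)) =
            (w' ⬝ᵥ b (Fin.last m) / (w ⬝ᵥ b (Fin.last m))) * (w ⬝ᵥ c) := by
          field_simp
        linarith [hw'c, hprod]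

lemma farkasQ' {d : ℕ} {ι : Type*} [Fintype ι] (b : ι → (Fin d → ℚ)) (c : Fin d → ℚ)
    (h : ¬ ∃ l : ι → ℚ, (∀ i, 0 ≤ l i) ∧ c = ∑ i, l i • b i) :
    ∃ w : Fin d → ℚ, (∀ i, 0 ≤ w ⬝ᵥ b i) ∧ w ⬝ᵥ c < 0 := by
  have e := Fintype.equivFin ι
  have hnex : ¬ ∃ l : Fin (Fintype.card ι) → ℚ, (∀ i, 0 ≤ l i) ∧ c = ∑ i, l i • (b ∘ e.symm) i := by
    rintro ⟨l, hl, rfl⟩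
    refine h ⟨l ∘ e, fun i => hl _, ?_⟩
    exact Fintype.sum_equiv e.symm _ _ (fun k => by
      rw [Function.comp_apply, Function.comp_apply, Equiv.apply_symm_apply])
  obtain ⟨w, hw, hwc⟩ := farkasQ (Fintype.card ι) (b ∘ e.symm) c hnex
  exact ⟨w, fun i => by simpa using hw (e i), hwc⟩

/-- Stiemke-type theorem of the alternative over `ℚ`. -/
lemma stiemke {d n : ℕ} (a : Fin n → (Fin d → ℚ)) (S : Set (Fin n))
    (h : ∀ u : Fin n → ℚ, (∀ j ∈ S, 0 ≤ u j) → (∑ j, u j • a j) = 0 → ∀ j ∈ S, u j = 0) :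
    ∃ w : Fin d → ℚ, (∀ j ∈ S, 0 < w ⬝ᵥ a j) ∧ ∀ j ∉ S, w ⬝ᵥ a j = 0 := by
  set g : (Fin n ⊕ Fin n) → (Fin (d+1) → ℚ) := fun x =>
    Sum.elim (fun j => Fin.cons (if j ∈ S then (1:ℚ) else 0) (a j))
      (fun j => Fin.cons 0 (fun i => if j ∈ S then 0 else -(a j i))) x with hg
  have hnex : ¬ ∃ l : (Fin n ⊕ Fin n) → ℚ, (∀ i, 0 ≤ l i) ∧
      (Fin.cons 1 0 : Fin (d+1) → ℚ) = ∑ i, l i • g i := by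
    rintro ⟨l, hl, heq⟩
    have hcoord0 : (1:ℚ) = ∑ j, l (Sum.inl j) * (if j ∈ S then (1:ℚ) else 0) := by
      have := congrFun heq 0
      simp only [Fin.cons_zero, Finset.sum_apply, Pi.smul_apply, smul_eq_mul] at this
      rw [Fintype.sum_sum_type] at this
      simpa [hg] using this
    have hcoordi : ∀ i : Fin d, (0:ℚ) =
        ∑ j, l (Sum.inl j) * a j i + ∑ j, l (Sum.inr j) * (if j ∈ S then 0 else -(a j i)) := by
      intro i
      have := congrFun heq i.succ
      simp only [Finset.sum_apply, Pi.smul_apply, smul_eq_mul] at this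
      rw [Fintype.sum_sum_type] at this
      simpa [hg] using this
    set u : Fin n → ℚ := fun j => l (Sum.inl j) - (if j ∈ S then 0 else l (Sum.inr j)) with hu
    have hu0 : ∀ j ∈ S, u j = 0 := by
      refine h u (fun j hj => by simp [hu, if_pos hj, hl]) ?_
      funext i
      have := hcoordi i
      simp only [Finset.sum_apply, Pi.smul_apply, smul_eq_mul, hu, Pi.zero_apply]
      rw [Finset.sum_congr rfl (fun j (_ : j ∈ Finset.univ) =>
        (sub_mul (l (Sum.inl j)) _ (a j i)))]
      rw [Finset.sum_sub_distrib]
      have e3 : ∑ j, (if j ∈ S then 0 else l (Sum.inr j)) * a j i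
          = -∑ j, l (Sum.inr j) * (if j ∈ S then 0 else -(a j i)) := by
        rw [← Finset.sum_neg_distrib]
        refine Finset.sum_congr rfl (fun j _ => ?_)
        by_cases hj : j ∈ S <;> simp [hj]
      rw [e3]
      linarith [this]
    have : (1:ℚ) = 0 := by
      rw [hcoord0]
      rw [Finset.sum_congr rfl (fun j (_ : j ∈ Finset.univ) => ?_)]
      · exact Finset.sum_const_zero
      · by_cases hj : j ∈ S
        · have := hu0 j hj
          simp [hu, if_pos hj] at this
          simp [hj, this]
        · simp [hj]
    norm_num at this
  obtain ⟨what, hwg, hwc⟩ := farkasQ' g (Fin.cons 1 0) hnex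
  set w : Fin d → ℚ := fun i => what i.succ with hwdef
  have hdot : ∀ v : Fin (d+1) → ℚ, what ⬝ᵥ v = what 0 * v 0 + ∑ i, w i * v i.succ := by
    intro v
    rw [dotProduct, Fin.sum_univ_succ]
  have hs : what 0 < 0 := by
    have := hwc
    rw [hdot] at this
    simpa using this
  refine ⟨w, fun j hj => ?_, fun j hj => ?_⟩
  · have h1 := hwg (Sum.inl j)
    rw [hdot] at h1
    simp only [hg, Sum.elim_inl, Fin.cons_zero, Fin.cons_succ, if_pos hj] at h1
    have : w ⬝ᵥ a j = ∑ i, w i * a j i := rfl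
    rw [this]
    linarith
  · have h1 := hwg (Sum.inl j)
    have h2 := hwg (Sum.inr j)
    rw [hdot] at h1 h2
    simp only [hg, Sum.elim_inl, Sum.elim_inr, Fin.cons_zero, Fin.cons_succ, if_neg hj] at h1 h2
    have e1 : w ⬝ᵥ a j = ∑ i, w i * a j i := rfl
    have e2 : ∑ i, w i * -(a j i) = -∑ i, w i * a j i := by
      simp [Finset.sum_neg_distrib]
    rw [e2] at h2
    rw [e1]
    linarith

/-! ### Grading machinery -/

variable {d n : ℕ} (A : Matrix (Fin d) (Fin n) ℤ)

lemma adeg_add (e f : Fin n →₀ ℕ) : adeg A (e + f) = adeg A e + adeg A f := by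
  funext i
  simp only [adeg, Pi.add_apply, Finsupp.add_apply, ← Finset.sum_add_distrib]
  refine Finset.sum_congr rfl fun j _ => ?_
  push_cast
  ring

lemma coeff_gradePiece (p : MvPolynomial (Fin n) ℂ) (b : Fin d → ℤ) (e : Fin n →₀ ℕ) :
    coeff e (gradePiece A p b) = if adeg A e = b then coeff e p else 0 := by
  rw [gradePiece, coeff_sum]
  rw [Finset.sum_congr rfl (fun f (_ : f ∈ _) => coeff_monomial e f (coeff f p))]
  rw [Finset.sum_ite_eq' _ e (fun f => coeff f p)]
  by_cases h1 : adeg A e = b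
  · by_cases h2 : e ∈ p.support
    · rw [if_pos (Finset.mem_filter.mpr ⟨h2, h1⟩), if_pos h1]
    · rw [if_neg, if_pos h1]
      · rw [notMem_support_iff.mp h2]
      · intro hc
        exact h2 (Finset.mem_filter.mp hc).1
  · rw [if_neg, if_neg h1]
    intro hc
    exact h1 (Finset.mem_filter.mp hc).2

/-- Homogeneity of a polynomial in the `A`-grading. -/
def IsHomog (b : Fin d → ℤ) (g : MvPolynomial (Fin n) ℂ) : Prop :=
  ∀ e ∈ g.support, adeg A e = b

lemma isHomog_gradePiece (p : MvPolynomial (Fin n) ℂ) (b : Fin d → ℤ) :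
    IsHomog A b (gradePiece A p b) := by
  intro e he
  have := (mem_support_iff.mp he)
  rw [coeff_gradePiece] at this
  by_contra hne
  rw [if_neg hne] at this
  exact this rfl

lemma gradePiece_eq_of_isHomog {b b' : Fin d → ℤ} {g : MvPolynomial (Fin n) ℂ}
    (hg : IsHomog A b g) : gradePiece A g b' = if b' = b then g else 0 := by
  by_cases h : b' = b
  · subst h
    rw [if_pos rfl, gradePiece, Finset.filter_true_of_mem hg, support_sum_monomial_coeff]
  · rw [if_neg h, gradePiece, Finset.filter_false_of_mem, Finset.sum_empty]
    intro e he
    rw [hg e he]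
    exact fun hc => h hc.symm

lemma gradePiece_add (p q : MvPolynomial (Fin n) ℂ) (b : Fin d → ℤ) :
    gradePiece A (p + q) b = gradePiece A p b + gradePiece A q b := by
  apply MvPolynomial.ext
  intro e
  rw [coeff_add, coeff_gradePiece, coeff_gradePiece, coeff_gradePiece, coeff_add]
  by_cases h : adeg A e = b <;> simp [h]

lemma gradePiece_zero (b : Fin d → ℤ) : gradePiece A (0 : MvPolynomial (Fin n) ℂ) b = 0 := by
  apply MvPolynomial.ext
  intro e
  rw [coeff_gradePiece]
  simp

lemma gradePiece_sum {ι : Type*} (s : Finset ι) (f : ι → MvPolynomial (Fin n) ℂ)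
    (b : Fin d → ℤ) : gradePiece A (∑ i ∈ s, f i) b = ∑ i ∈ s, gradePiece A (f i) b := by
  induction s using Finset.induction_on with
  | empty => simp [gradePiece_zero]
  | insert _ _ hne ih =>
    rw [Finset.sum_insert hne, Finset.sum_insert hne, gradePiece_add, ih]

lemma gradePiece_monomial_mul (e : Fin n →₀ ℕ) (c : ℂ) (p : MvPolynomial (Fin n) ℂ)
    (b : Fin d → ℤ) :
    gradePiece A (monomial e c * p) b = monomial e c * gradePiece A p (b - adeg A e) := by
  apply MvPolynomial.ext
  intro f
  rw [coeff_gradePiece, coeff_monomial_mul', coeff_monomial_mul', coeff_gradePiece]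
  by_cases hle : e ≤ f
  · have hf : adeg A f = adeg A e + adeg A (f - e) := by
      conv_lhs => rw [← add_tsub_cancel_of_le hle]
      rw [adeg_add]
    have hiff : (adeg A f = b) ↔ (adeg A (f - e) = b - adeg A e) := by
      rw [hf]
      constructor
      · intro h; rw [← h]; abel
      · intro h; rw [h]; abel
    by_cases h : adeg A (f - e) = b - adeg A e <;> simp [hle, hiff, h]
  · simp [hle]

lemma sum_gradePiece (p : MvPolynomial (Fin n) ℂ) :
    ∑ b ∈ p.support.image (adeg A), gradePiece A p b = p := by
  unfold gradePiece
  rw [Finset.sum_fiberwise_of_maps_to (fun e he => Finset.mem_image_of_mem _ he),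
    support_sum_monomial_coeff]

lemma isAGraded_span (S : Set (MvPolynomial (Fin n) ℂ))
    (hS : ∀ g ∈ S, ∃ b, IsHomog A b g) :
    ∀ p ∈ Ideal.span S, ∀ b, gradePiece A p b ∈ Ideal.span S := by
  intro p hp
  induction hp using Submodule.span_induction with
  | mem x hx =>
    intro b
    obtain ⟨β, hβ⟩ := hS x hx
    rw [gradePiece_eq_of_isHomog A hβ]
    by_cases h : b = β <;> simp only [h, if_pos, if_neg, ite_true, ite_false]
    exacts [Ideal.subset_span hx, Ideal.zero_mem _]
  | zero => intro b; rw [gradePiece_zero]; exact Ideal.zero_mem _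
  | add x y hx hy ihx ihy =>
    intro b
    rw [gradePiece_add]
    exact Ideal.add_mem _ (ihx b) (ihy b)
  | smul r x hx ihx =>
    intro b
    have hrx : r • x = ∑ e ∈ r.support, monomial e (coeff e r) * x := by
      rw [smul_eq_mul, ← Finset.sum_mul, support_sum_monomial_coeff]
    rw [hrx, gradePiece_sum]
    refine Ideal.sum_mem _ (fun e he => ?_)
    rw [gradePiece_monomial_mul]
    exact Ideal.mul_mem_left _ _ (ihx _)

/-! ### Toric lemmas -/

lemma binom_mem (u : Fin n → ℤ) (hu : ∀ i, ∑ j, A i j * u j = 0) :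
    (monomial (Finsupp.equivFunOnFinite.symm fun j => (u j).toNat) (1:ℂ)
      - monomial (Finsupp.equivFunOnFinite.symm fun j => (-u j).toNat) 1) ∈ toricIdeal A :=
  Ideal.subset_span ⟨u, hu, rfl⟩

lemma isHomog_binom (u : Fin n → ℤ) (hu : ∀ i, ∑ j, A i j * u j = 0) :
    IsHomog A (adeg A (Finsupp.equivFunOnFinite.symm fun j => (u j).toNat))
      (monomial (Finsupp.equivFunOnFinite.symm fun j => (u j).toNat) (1:ℂ)
        - monomial (Finsupp.equivFunOnFinite.symm fun j => (-u j).toNat) 1) := by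
  have key : adeg A (Finsupp.equivFunOnFinite.symm fun j => (-u j).toNat)
      = adeg A (Finsupp.equivFunOnFinite.symm fun j => (u j).toNat) := by
    funext i
    simp only [adeg, Finsupp.coe_equivFunOnFinite_symm]
    rw [← sub_eq_zero, ← Finset.sum_sub_distrib]
    have : ∀ j : Fin n, (((-u j).toNat : ℤ)) * A i j - ((u j).toNat : ℤ) * A i j
        = A i j * (-(u j)) := by
      intro j
      have h1 : ((u j).toNat : ℤ) - ((-u j).toNat : ℤ) = u j := Int.toNat_sub_toNat_neg _
      linear_combination (-(A i j)) * h1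
    rw [Finset.sum_congr rfl (fun j _ => this j)]
    have h2 : ∑ j, A i j * (-(u j)) = -∑ j, A i j * u j := by
      simp [Finset.sum_neg_distrib]
    rw [h2, hu i, neg_zero]
  intro e he
  have hsub := MvPolynomial.support_sub (Fin n) _ _ he
  rw [Finset.mem_union] at hsub
  rcases hsub with h | h
  · rw [support_monomial, if_neg one_ne_zero] at h
    rw [Finset.mem_singleton.mp h]
  · rw [support_monomial, if_neg one_ne_zero] at h
    rw [Finset.mem_singleton.mp h, key]

lemma binom_diff_mem (e e0 : Fin n →₀ ℕ) (h : adeg A e = adeg A e0) :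
    (monomial e (1:ℂ) - monomial e0 1) ∈ toricIdeal A := by
  set u : Fin n → ℤ := fun j => (e j : ℤ) - (e0 j : ℤ) with hudef
  have hu : ∀ i, ∑ j, A i j * u j = 0 := by
    intro i
    have h1 := congrFun h i
    simp only [adeg] at h1
    have h2 : ∀ j : Fin n, A i j * u j = (e j : ℤ) * A i j - (e0 j : ℤ) * A i j := by
      intro j
      simp only [hudef]
      ring
    rw [Finset.sum_congr rfl (fun j _ => h2 j), Finset.sum_sub_distrib, h1, sub_self]
  set m : Fin n →₀ ℕ := Finsupp.equivFunOnFinite.symm (fun j => min (e j) (e0 j)) with hm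
  have h1 : m + (Finsupp.equivFunOnFinite.symm fun j => (u j).toNat) = e := by
    apply Finsupp.ext
    intro k
    simp only [Finsupp.add_apply, hm, Finsupp.coe_equivFunOnFinite_symm, hudef]
    omega
  have h2 : m + (Finsupp.equivFunOnFinite.symm fun j => (-u j).toNat) = e0 := by
    apply Finsupp.ext
    intro k
    simp only [Finsupp.add_apply, hm, Finsupp.coe_equivFunOnFinite_symm, hudef]
    omega
  have heq : monomial e (1:ℂ) - monomial e0 1 = monomial m 1 *
      (monomial (Finsupp.equivFunOnFinite.symm fun j => (u j).toNat) (1:ℂ)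
        - monomial (Finsupp.equivFunOnFinite.symm fun j => (-u j).toNat) 1) := by
    rw [mul_sub, monomial_mul, monomial_mul, one_mul, h1, h2]
  rw [heq]
  exact Ideal.mul_mem_left _ _ (binom_mem A u hu)

lemma monomial_mem_of_X_mem (P : Ideal (MvPolynomial (Fin n) ℂ)) (j : Fin n) (hj : X j ∈ P)
    (e : Fin n →₀ ℕ) (he : e j ≠ 0) (c : ℂ) : monomial e c ∈ P := by
  have hsum : (e - Finsupp.single j 1) + Finsupp.single j 1 = e := by
    apply Finsupp.ext
    intro k
    by_cases hk : k = j
    · subst hk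
      simp only [Finsupp.add_apply, Finsupp.tsub_apply, Finsupp.single_eq_same]
      omega
    · simp only [Finsupp.add_apply, Finsupp.tsub_apply,
        Finsupp.single_eq_of_ne' (fun h => hk h.symm)]
      omega
  have heq : monomial e c = monomial (e - Finsupp.single j 1) c * X j := by
    rw [X, monomial_mul, mul_one, hsum]
  rw [heq]
  exact Ideal.mul_mem_left _ _ hj

lemma monomial_mem_prime (P : Ideal (MvPolynomial (Fin n) ℂ)) (hP : P.IsPrime)
    (e : Fin n →₀ ℕ) (h : monomial e (1:ℂ) ∈ P) : ∃ j, e j ≠ 0 ∧ X j ∈ P := by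
  have hmon : monomial e (1:ℂ) = ∏ j, X j ^ e j := by
    rw [monomial_eq, C_1, one_mul, Finsupp.prod_pow]
  rw [hmon] at h
  obtain ⟨j, -, hj⟩ := (Ideal.IsPrime.prod_mem_iff (hp := hP)).mp h
  have hej : e j ≠ 0 := by
    intro h0
    rw [h0, pow_zero] at hj
    exact hP.ne_top ((Ideal.eq_top_iff_one _).mpr hj)
  exact ⟨j, hej, hP.mem_of_pow_mem _ hj⟩

/-! ### Faces -/

/-- A linear functional on `ℝ^d` given by dot product with `w`. -/
noncomputable def dotL {d : ℕ} (w : Fin d → ℝ) : (Fin d → ℝ) →ₗ[ℝ] ℝ where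
  toFun x := ∑ i, w i * x i
  map_add' x y := by
    simp only [Pi.add_apply, mul_add, Finset.sum_add_distrib]
  map_smul' c x := by
    simp only [Pi.smul_apply, smul_eq_mul, RingHom.id_apply, Finset.mul_sum]
    exact Finset.sum_congr rfl fun i _ => by ring

lemma face_of_star (τ : Set (Fin n))
    (hstar : ∀ u : Fin n → ℤ, (∀ i, ∑ j, A i j * u j = 0) → (∀ j, j ∉ τ → 0 ≤ u j) →
      ∀ j, j ∉ τ → u j = 0) : IsFace A τ := by
  set aq : Fin n → (Fin d → ℚ) := fun j i => (A i j : ℚ) with haq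
  have hyp : ∀ u : Fin n → ℚ, (∀ j ∈ {j | j ∉ τ}, 0 ≤ u j) → (∑ j, u j • aq j) = 0 →
      ∀ j ∈ {j | j ∉ τ}, u j = 0 := by
    intro u hupos husum j hjS
    set N : ℤ := ∏ k, ((u k).den : ℤ) with hN
    have hNpos : 0 < N :=
      Finset.prod_pos (fun k _ => by exact_mod_cast (u k).den_pos)
    set v : Fin n → ℤ := fun k => (u k).num * (N / ((u k).den : ℤ)) with hv
    have hcast : ∀ k, ((v k : ℚ)) = u k * (N : ℚ) := by
      intro k
      have hdvd : ((u k).den : ℤ) ∣ N := Finset.dvd_prod_of_mem _ (Finset.mem_univ k)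
      simp only [hv, Int.cast_mul, Int.cast_div_charZero hdvd]
      have h3 : ((u k).num : ℚ) * (((N:ℤ):ℚ) / (((u k).den : ℤ):ℚ))
          = (((u k).num : ℚ) / (((u k).den:ℕ):ℚ)) * ((N:ℤ):ℚ) := by
        push_cast
        ring
      rw [h3, Rat.num_div_den]
    have hAv : ∀ i, ∑ k, A i k * v k = 0 := by
      intro i
      have hs := congrFun husum i
      simp only [Finset.sum_apply, Pi.smul_apply, smul_eq_mul, Pi.zero_apply, haq] at hs
      have hq : ((∑ k, A i k * v k : ℤ) : ℚ) = (N:ℚ) * ∑ k, u k * (A i k : ℚ) := by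
        rw [Int.cast_sum, Finset.mul_sum]
        refine Finset.sum_congr rfl fun k _ => ?_
        rw [Int.cast_mul, hcast k]
        ring
      rw [hs, mul_zero] at hq
      exact_mod_cast hq
    have hvpos : ∀ k, k ∉ τ → 0 ≤ v k := by
      intro k hk
      have hq : (0:ℚ) ≤ (v k : ℚ) := by
        rw [hcast]
        exact mul_nonneg (hupos k hk) (by exact_mod_cast le_of_lt hNpos)
      exact_mod_cast hq
    have hvj := hstar v hAv hvpos j hjS
    have h0 : u j * (N:ℚ) = 0 := by
      rw [← hcast, hvj, Int.cast_zero]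
    rcases mul_eq_zero.mp h0 with h | h
    · exact h
    · exfalso
      have : (N:ℚ) ≠ 0 := by exact_mod_cast ne_of_gt hNpos
      exact this h
  obtain ⟨w, hwpos, hwzero⟩ := stiemke aq {j | j ∉ τ} hyp
  have hval : ∀ j, dotL (fun i => ((w i : ℚ) : ℝ)) (matColR A j) = ((w ⬝ᵥ aq j : ℚ) : ℝ) := by
    intro j
    simp only [dotL, LinearMap.coe_mk, AddHom.coe_mk, matColR, dotProduct, haq]
    push_cast
    rfl
  refine ⟨dotL (fun i => ((w i : ℚ) : ℝ)), fun j => ?_, ?_⟩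
  · rw [hval]
    by_cases hj : j ∈ τ
    · rw [hwzero j (by simp [hj])]
      simp
    · have := hwpos j hj
      have : (0:ℝ) < ((w ⬝ᵥ aq j : ℚ) : ℝ) := by exact_mod_cast this
      exact le_of_lt this
  · ext j
    simp only [Set.mem_setOf_eq]
    rw [hval]
    constructor
    · intro hj
      rw [hwzero j (by simp [hj])]
      simp
    · intro h0
      by_contra hj
      have := hwpos j hj
      have h1 : (0:ℝ) < ((w ⬝ᵥ aq j : ℚ) : ℝ) := by exact_mod_cast this
      rw [h0] at h1
      exact lt_irrefl _ h1

lemma face_balance (τ : Set (Fin n)) (hface : IsFace A τ) (u : Fin n → ℤ)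
    (hu : ∀ i, ∑ j, A i j * u j = 0) (hneg : ∀ j, j ∉ τ → u j ≤ 0) :
    ∀ j, j ∉ τ → u j = 0 := by
  obtain ⟨φ, hφpos, hφzero⟩ := hface
  have hφτ : ∀ j, j ∈ τ ↔ φ (matColR A j) = 0 := fun j => by rw [hφzero]; exact Iff.rfl
  have hvec : ∑ j, (u j : ℝ) • matColR A j = 0 := by
    funext i
    simp only [Finset.sum_apply, Pi.smul_apply, smul_eq_mul, Pi.zero_apply, matColR]
    have h2 : ((∑ j, A i j * u j : ℤ) : ℝ) = ∑ j, (u j : ℝ) * (A i j : ℝ) := by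
      push_cast
      exact Finset.sum_congr rfl fun j _ => by ring
    rw [hu i] at h2
    exact_mod_cast h2.symm
  have hsum : ∑ j, (u j : ℝ) * φ (matColR A j) = 0 := by
    have h1 : ∑ j, (u j : ℝ) * φ (matColR A j) = φ (∑ j, (u j : ℝ) • matColR A j) := by
      rw [map_sum]
      exact Finset.sum_congr rfl fun j _ => by rw [_root_.map_smul, smul_eq_mul]
    rw [h1, hvec, map_zero]
  have hterm : ∀ j ∈ Finset.univ, (u j : ℝ) * φ (matColR A j) ≤ 0 := by
    intro j _
    by_cases hj : j ∈ τ
    · rw [(hφτ j).mp hj, mul_zero]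
    · exact mul_nonpos_of_nonpos_of_nonneg (by exact_mod_cast hneg j hj) (hφpos j)
  have hall := (Finset.sum_eq_zero_iff_of_nonpos hterm).mp hsum
  intro j hj
  have h1 := hall j (Finset.mem_univ j)
  have h2 : φ (matColR A j) ≠ 0 := fun h => hj ((hφτ j).mpr h)
  rcases mul_eq_zero.mp h1 with h | h
  · exact_mod_cast h
  · exact absurd h h2

lemma X_not_mem_faceIdeal (τ : Set (Fin n)) (hface : IsFace A τ) (j : Fin n) (hj : j ∈ τ) :
    X j ∉ toricFaceIdeal A τ := by
  set f : Fin n → ℂ := fun k => if k ∈ τ then 1 else 0 with hf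
  have prodval : ∀ g : Fin n → ℕ,
      (∏ k, f k ^ g k) = if (∀ k, g k ≠ 0 → k ∈ τ) then 1 else 0 := by
    intro g
    by_cases h : ∀ k, g k ≠ 0 → k ∈ τ
    · rw [if_pos h]
      apply Finset.prod_eq_one
      intro k _
      by_cases hk : k ∈ τ
      · simp [hf, hk]
      · have : g k = 0 := by
          by_contra h0
          exact hk (h k h0)
        simp [this]
    · rw [if_neg h]
      push_neg at h
      obtain ⟨k, hk0, hkτ⟩ := h
      refine Finset.prod_eq_zero (Finset.mem_univ k) ?_
      simp only [hf, if_neg hkτ]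
      exact zero_pow hk0
  have hker : toricFaceIdeal A τ ≤ RingHom.ker (aeval f : MvPolynomial (Fin n) ℂ →ₐ[ℂ] ℂ) := by
    rw [toricFaceIdeal, toricIdeal]
    refine sup_le ?_ ?_
    · rw [Ideal.span_le]
      rintro p ⟨u, hu, rfl⟩
      rw [SetLike.mem_coe, RingHom.mem_ker]
      rw [map_sub, aeval_monomial, aeval_monomial, _root_.map_one, one_mul, one_mul,
        Finsupp.prod_pow, Finsupp.prod_pow]
      simp only [Finsupp.coe_equivFunOnFinite_symm]
      rw [prodval, prodval]
      have hbal : (∀ k, (u k).toNat ≠ 0 → k ∈ τ) ↔ (∀ k, (-u k).toNat ≠ 0 → k ∈ τ) := by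
        have hneg_sum : ∀ i, ∑ k, A i k * (-u k) = 0 := by
          intro i
          have h2 : ∑ k, A i k * (-u k) = -∑ k, A i k * u k := by
            simp [Finset.sum_neg_distrib]
          rw [h2, hu i, neg_zero]
        constructor
        · intro h
          have hzero := face_balance A τ hface u hu (fun k hk => by
            have h5 : (u k).toNat = 0 := by
              by_contra h0
              exact hk (h k h0)
            omega)
          intro k hk0
          by_contra hkτ
          have h6 := hzero k hkτ
          omega
        · intro h
          have hzero := face_balance A τ hface (fun k => -u k) hneg_sum (fun k hk => by
            have h5 : (-u k).toNat = 0 := by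
              by_contra h0
              exact hk (h k h0)
            show -u k ≤ 0
            omega)
          intro k hk0
          by_contra hkτ
          have h6 : -u k = 0 := hzero k hkτ
          omega
      by_cases hc : ∀ k, (u k).toNat ≠ 0 → k ∈ τ
      · rw [if_pos hc, if_pos (hbal.mp hc), sub_self]
      · rw [if_neg hc, if_neg (fun h => hc (hbal.mpr h)), sub_self]
    · rw [Ideal.span_le]
      rintro p ⟨k, hk, rfl⟩
      rw [SetLike.mem_coe, RingHom.mem_ker, aeval_X]
      simp [hf, hk]
  intro hmem
  have h1 := hker hmem
  rw [RingHom.mem_ker, aeval_X] at h1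
  simp only [hf, if_pos hj] at h1
  exact one_ne_zero h1

lemma isAGraded_faceIdeal (τ : Set (Fin n)) : IsAGraded A (toricFaceIdeal A τ) := by
  have h : toricFaceIdeal A τ = Ideal.span
      ({p : MvPolynomial (Fin n) ℂ | ∃ u : Fin n → ℤ, (∀ i, ∑ j, A i j * u j = 0) ∧
        p = monomial (Finsupp.equivFunOnFinite.symm fun j => (u j).toNat) 1
          - monomial (Finsupp.equivFunOnFinite.symm fun j => (-u j).toNat) 1}
        ∪ {p | ∃ j ∉ τ, p = X j}) := by
    rw [Ideal.span_union]
    rfl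
  rw [IsAGraded, h]
  apply isAGraded_span
  rintro g (⟨u, hu, rfl⟩ | ⟨j, hj, rfl⟩)
  · exact ⟨_, isHomog_binom A u hu⟩
  · refine ⟨adeg A (Finsupp.single j 1), fun e he => ?_⟩
    rw [support_X, Finset.mem_singleton] at he
    rw [he]

lemma homog_mem_face (P : Ideal (MvPolynomial (Fin n) ℂ)) (hP : P.IsPrime)
    (hle : toricFaceIdeal A {j | X j ∉ P} ≤ P)
    (q : MvPolynomial (Fin n) ℂ) (hq : q ∈ P) (b : Fin d → ℤ) (hhom : IsHomog A b q) :
    q ∈ toricFaceIdeal A {j | X j ∉ P} := by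
  set τ : Set (Fin n) := {j | X j ∉ P} with hτ
  set E₁ := q.support.filter (fun e => ∀ j, e j ≠ 0 → j ∈ τ) with hE1
  set E₂ := q.support.filter (fun e => ¬ ∀ j, e j ≠ 0 → j ∈ τ) with hE2
  have hq12 : q = (∑ e ∈ E₁, monomial e (coeff e q)) + ∑ e ∈ E₂, monomial e (coeff e q) := by
    rw [hE1, hE2, Finset.sum_filter_add_sum_filter_not, support_sum_monomial_coeff]
  have hq2 : (∑ e ∈ E₂, monomial e (coeff e q)) ∈ toricFaceIdeal A τ := by
    refine Ideal.sum_mem _ (fun e he => ?_)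
    obtain ⟨-, hcond⟩ := Finset.mem_filter.mp he
    push_neg at hcond
    obtain ⟨j, hj0, hjτ⟩ := hcond
    have hXspan : X j ∈ Ideal.span {p : MvPolynomial (Fin n) ℂ | ∃ k ∉ τ, p = X k} :=
      Ideal.subset_span ⟨j, hjτ, rfl⟩
    exact Ideal.mem_sup_right (monomial_mem_of_X_mem _ j hXspan e hj0 _)
  by_cases hE : E₁ = ∅
  · rw [hq12, hE, Finset.sum_empty, zero_add]
    exact hq2
  · obtain ⟨e₀, he₀⟩ := Finset.nonempty_iff_ne_empty.mpr hE
    set c : ℂ := ∑ e ∈ E₁, coeff e q with hc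
    have hdiff : ((∑ e ∈ E₁, monomial e (coeff e q)) - monomial e₀ c) ∈ toricIdeal A := by
      rw [hc, map_sum, ← Finset.sum_sub_distrib]
      refine Ideal.sum_mem _ (fun e he => ?_)
      have h1 : monomial e (coeff e q) - monomial e₀ (coeff e q)
          = (coeff e q) • (monomial e (1:ℂ) - monomial e₀ 1) := by
        rw [smul_sub, smul_monomial, smul_monomial, smul_eq_mul, mul_one]
      rw [h1, smul_eq_C_mul]
      refine Ideal.mul_mem_left _ _ (binom_diff_mem A e e₀ ?_)
      rw [hhom e (Finset.mem_filter.mp he).1, hhom e₀ (Finset.mem_filter.mp he₀).1]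
    by_cases hc0 : c = 0
    · have h3 : (∑ e ∈ E₁, monomial e (coeff e q)) ∈ toricIdeal A := by
        have h4 := hdiff
        rw [hc0, monomial_zero, sub_zero] at h4
        exact h4
      rw [hq12]
      exact Ideal.add_mem _ (Ideal.mem_sup_left h3) hq2
    · exfalso
      have hcP : monomial e₀ c ∈ P := by
        have h7 : q - ((∑ e ∈ E₁, monomial e (coeff e q)) + ∑ e ∈ E₂, monomial e (coeff e q))
            = 0 := sub_eq_zero.mpr hq12
        have hm : q - (∑ e ∈ E₂, monomial e (coeff e q))
            - ((∑ e ∈ E₁, monomial e (coeff e q)) - monomial e₀ c) = monomial e₀ c := by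
          linear_combination h7
        rw [← hm]
        exact P.sub_mem (P.sub_mem hq (hle hq2)) (hle (Ideal.mem_sup_left hdiff))
      have hmonP : monomial e₀ (1:ℂ) ∈ P := by
        have h3 := P.mul_mem_left (C c⁻¹) hcP
        rw [C_mul_monomial, inv_mul_cancel₀ hc0] at h3
        exact h3
      obtain ⟨j, hj0, hjX⟩ := monomial_mem_prime P hP e₀ hmonP
      have hjτ : j ∈ τ := (Finset.mem_filter.mp he₀).2 j hj0
      exact hjτ hjX

end Auxiliary


/-- a prime ideal of `ℂ[x₁,…,xₙ]` is `A`-graded and contains `I_A` iff it is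
`I_A^τ` for some face `τ` of `ℝ≥0 A`, and distinct faces give distinct ideals. -/
theorem aGraded_primes_containing_toricIdeal_biject_with_faces
    {d n : ℕ} (A : Matrix (Fin d) (Fin n) ℤ)
    (hfull : IsFull A) (hpointed : IsPointed A) (hcols : ∀ j, matCol A j ≠ 0) :
    (∀ P : Ideal (MvPolynomial (Fin n) ℂ), P.IsPrime →
      ((IsAGraded A P ∧ toricIdeal A ≤ P) ↔
        ∃ τ : Set (Fin n), IsFace A τ ∧ P = toricFaceIdeal A τ)) ∧
    (∀ τ τ' : Set (Fin n), IsFace A τ → IsFace A τ' → τ ≠ τ' →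
      toricFaceIdeal A τ ≠ toricFaceIdeal A τ') := by
  classical
  have hchar : ∀ τ : Set (Fin n), IsFace A τ → ∀ j, (j ∈ τ ↔ X j ∉ toricFaceIdeal A τ) := by
    intro τ hface j
    constructor
    · exact fun hj => X_not_mem_faceIdeal A τ hface j hj
    · intro hX
      by_contra hj
      exact hX (Ideal.mem_sup_right (Ideal.subset_span ⟨j, hj, rfl⟩))
  constructor
  · intro P hP
    constructor
    · rintro ⟨hgr, hIA⟩
      set τ : Set (Fin n) := {j | X j ∉ P} with hτ
      have hstar : ∀ u : Fin n → ℤ, (∀ i, ∑ j, A i j * u j = 0) →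
          (∀ j, j ∉ τ → 0 ≤ u j) → ∀ j, j ∉ τ → u j = 0 := by
        intro u hu hpos j hj
        by_contra hne
        have hupos : 0 < u j := lt_of_le_of_ne (hpos j hj) (Ne.symm hne)
        have hXj : X j ∈ P := not_not.mp (fun h => hj h)
        have hppos : monomial (Finsupp.equivFunOnFinite.symm fun k => (u k).toNat) (1:ℂ) ∈ P := by
          refine monomial_mem_of_X_mem P j hXj _ ?_ 1
          simp only [Finsupp.coe_equivFunOnFinite_symm]
          omega
        have hbin := hIA (binom_mem A u hu)
        have hneg : monomial (Finsupp.equivFunOnFinite.symm fun k => (-u k).toNat) (1:ℂ) ∈ P := by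
          have := P.sub_mem hppos hbin
          simpa using this
        obtain ⟨k, hk0, hkX⟩ := monomial_mem_prime P hP _ hneg
        simp only [Finsupp.coe_equivFunOnFinite_symm] at hk0
        have hkτ : k ∉ τ := fun hkm => hkm hkX
        have := hpos k hkτ
        omega
      have hface : IsFace A τ := face_of_star A τ hstar
      refine ⟨τ, hface, ?_⟩
      have hle : toricFaceIdeal A τ ≤ P := by
        rw [toricFaceIdeal]
        refine sup_le hIA ?_
        rw [Ideal.span_le]
        rintro q ⟨j, hj, rfl⟩
        exact not_not.mp hj
      refine le_antisymm ?_ hle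
      intro p hp
      rw [← sum_gradePiece A p]
      refine Ideal.sum_mem _ (fun b _ => ?_)
      exact homog_mem_face A P hP hle _ (hgr p hp b) b (isHomog_gradePiece A p b)
    · rintro ⟨τ, hface, rfl⟩
      exact ⟨isAGraded_faceIdeal A τ, le_sup_left⟩
  · intro τ τ' hf hf' hne heq
    apply hne
    ext j
    rw [hchar τ hf j, hchar τ' hf' j, heq]
end

section
/- Let A ∈ ℤ^{d×n} be full and pointed with all columns nonzero, and suppose the semigroup ℕA is saturated. Then ℕA ∩ sRes(A) = ∅; in particular 0 is not a strongly resonant parameter of A. -/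
/-- The cone `ℝ≥0 A ⊆ ℝ^d` spanned by the columns of `A`. -/
def coneRA {d n : ℕ} (A : Matrix (Fin d) (Fin n) ℤ) : Set (Fin d → ℝ) :=
  {w | ∃ lam : Fin n → ℝ, (∀ j, 0 ≤ lam j) ∧ w = ∑ j, lam j • (fun i => (A i j : ℝ))}

/-- `ℕA` is saturated: `ℕA = ℤA ∩ ℝ≥0 A`. -/
def IsSaturated {d n : ℕ} (A : Matrix (Fin d) (Fin n) ℤ) : Prop :=
  ∀ v : Fin d → ℤ, v ∈ semigroupNA A ↔
    ((∃ c : Fin n → ℤ, v = ∑ j, c j • matCol A j) ∧ (fun i => (v i : ℝ)) ∈ coneRA A)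

/-- The true degrees of `S_A/(t^{a_j})`: elements of `ℕA` that are not in `a_j + ℕA`. -/
def tdegSlice {d n : ℕ} (A : Matrix (Fin d) (Fin n) ℤ) (j : Fin n) : Set (Fin d → ℤ) :=
  {b | b ∈ semigroupNA A ∧ b - matCol A j ∉ semigroupNA A}

/-- The quasi-degrees of `S_A/(t^{a_j})`: the Zariski closure in `ℂ^d` of the true degrees. -/
def qdegSlice {d n : ℕ} (A : Matrix (Fin d) (Fin n) ℤ) (j : Fin n) : Set (Fin d → ℂ) :=
  {β | ∀ p : MvPolynomial (Fin d) ℂ,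
    (∀ b ∈ tdegSlice A j, MvPolynomial.eval (fun i => (b i : ℂ)) p = 0) →
    MvPolynomial.eval β p = 0}

/-- The strongly resonant parameters
`sRes(A) = ⋃_j ⋃_{k∈ℕ} { -(k+1)a_j + γ : γ ∈ qdeg_A(S_A/(t^{a_j})) }`. -/
def sRes {d n : ℕ} (A : Matrix (Fin d) (Fin n) ℤ) : Set (Fin d → ℂ) :=
  {β | ∃ j : Fin n, ∃ k : ℕ, ∃ γ ∈ qdegSlice A j,
    β = fun i => -((k : ℂ) + 1) * (A i j : ℂ) + γ i}

namespace SResAux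
variable {d : ℕ}

def castVec (w : Fin d → ℤ) : Fin d → ℝ := fun i => (w i : ℝ)

def rdot (h : Fin d → ℤ) (x : Fin d → ℝ) : ℝ := ∑ i, (h i : ℝ) * x i

def zdot (h w : Fin d → ℤ) : ℤ := ∑ i, h i * w i

lemma rdot_castVec (h w : Fin d → ℤ) : rdot h (castVec w) = (zdot h w : ℝ) := by
  simp [rdot, zdot, castVec]

lemma rdot_sub_smul (h : Fin d → ℤ) (x : Fin d → ℝ) (t : ℝ) (a : Fin d → ℤ) :
    rdot h (x - t • castVec a) = rdot h x - t * (zdot h a : ℝ) := by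
  simp only [rdot, zdot, castVec, Pi.sub_apply, Pi.smul_apply, smul_eq_mul, mul_sub,
    Finset.sum_sub_distrib, Finset.mul_sum, Int.cast_sum, Int.cast_mul]
  congr 1
  apply Finset.sum_congr rfl
  intro i _
  push_cast
  ring

lemma rdot_comb (c e : ℤ) (g h : Fin d → ℤ) (x : Fin d → ℝ) :
    rdot (c • g - e • h) x = (c : ℝ) * rdot g x - (e : ℝ) * rdot h x := by
  simp only [rdot, Finset.mul_sum, Pi.sub_apply, Pi.smul_apply, smul_eq_mul, Int.cast_sub,
    Int.cast_mul, sub_mul, Finset.sum_sub_distrib]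
  congr 1 <;> (apply Finset.sum_congr rfl; intro i _; push_cast; ring)

lemma zdot_sub (h b a : Fin d → ℤ) : zdot h (b - a) = zdot h b - zdot h a := by
  simp [zdot, mul_sub, Finset.sum_sub_distrib]


def coneList : List (Fin d → ℤ) → Set (Fin d → ℝ)
  | [] => {0}
  | a :: L => {x | ∃ t : ℝ, 0 ≤ t ∧ x - t • castVec a ∈ coneList L}

lemma basis_rdot (i : Fin d) (c : ℤ) (x : Fin d → ℝ) :
    rdot (fun k => if k = i then c else 0) x = (c : ℝ) * x i := by
  rw [rdot, Finset.sum_eq_single i]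
  · simp
  · intro k _ hk; simp [hk]
  · simp

theorem exists_halfspaces (L : List (Fin d → ℤ)) :
    ∃ H : Finset (Fin d → ℤ), ∀ x, x ∈ coneList L ↔ ∀ h ∈ H, 0 ≤ rdot h x := by
  induction L with
  | nil =>
      classical
      refine ⟨(Finset.univ.image fun i => (fun k => if k = i then (1:ℤ) else 0)) ∪
        (Finset.univ.image fun i => (fun k => if k = i then (-1:ℤ) else 0)), fun x => ?_⟩
      constructor
      · rintro rfl h hh
        simp only [Finset.mem_union, Finset.mem_image, Finset.mem_univ, true_and] at hh
        rcases hh with ⟨i, rfl⟩ | ⟨i, rfl⟩ <;> simp [basis_rdot]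
      · intro hx
        have hzero : ∀ i, x i = 0 := by
          intro i
          have h1 : 0 ≤ (1:ℝ) * x i := by
            have := hx (fun k => if k = i then (1:ℤ) else 0) (by
              apply Finset.mem_union_left
              exact Finset.mem_image.2 ⟨i, Finset.mem_univ i, rfl⟩)
            rw [basis_rdot] at this; exact_mod_cast this
          have h2 : 0 ≤ (-1:ℝ) * x i := by
            have := hx (fun k => if k = i then (-1:ℤ) else 0) (by
              apply Finset.mem_union_right
              exact Finset.mem_image.2 ⟨i, Finset.mem_univ i, rfl⟩)
            rw [basis_rdot] at this; exact_mod_cast this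
          nlinarith
        exact funext hzero
  | cons a L ih =>
      classical
      obtain ⟨H, hH⟩ := ih
      refine ⟨H.filter (fun h => 0 ≤ zdot h a) ∪
        (((H ×ˢ H).filter fun p => zdot p.1 a < 0 ∧ 0 < zdot p.2 a).image
          fun p => zdot p.2 a • p.1 - zdot p.1 a • p.2), fun x => ?_⟩
      constructor
      · rintro ⟨t, ht0, hmem⟩ f hf
        have key : ∀ h ∈ H, t * (zdot h a : ℝ) ≤ rdot h x := by
          intro h hh
          have := (hH _).1 hmem h hh
          rw [rdot_sub_smul] at this
          linarith
        simp only [Finset.mem_union, Finset.mem_filter, Finset.mem_image,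
          Finset.mem_product] at hf
        rcases hf with ⟨hfH, hfa⟩ | ⟨⟨g, h⟩, hp, rfl⟩
        · have h1 := key f hfH
          have h2 : (0:ℝ) ≤ (zdot f a : ℝ) := by exact_mod_cast hfa
          nlinarith
        · simp only [Finset.mem_filter, Finset.mem_product] at hp
          obtain ⟨⟨hgH, hhH⟩, hga, hha⟩ := hp
          rw [rdot_comb]
          have k1 := key g hgH
          have k2 := key h hhH
          have sg : ((zdot g a : ℤ):ℝ) < 0 := by exact_mod_cast hga
          have sh : (0:ℝ) < ((zdot h a : ℤ):ℝ) := by exact_mod_cast hha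
          nlinarith
      · intro hx
        have hx0 : ∀ h ∈ H, 0 ≤ zdot h a → 0 ≤ rdot h x := fun h hh ha =>
          hx h (Finset.mem_union_left _ (Finset.mem_filter.2 ⟨hh, ha⟩))
        have hxpair : ∀ g ∈ H, ∀ h ∈ H, zdot g a < 0 → 0 < zdot h a →
            0 ≤ (zdot h a : ℝ) * rdot g x - (zdot g a : ℝ) * rdot h x := by
          intro g hg h hh g1 h1
          have := hx _ (Finset.mem_union_right _ (Finset.mem_image.2
            ⟨(g, h), Finset.mem_filter.2 ⟨Finset.mem_product.2 ⟨hg, hh⟩, g1, h1⟩, rfl⟩))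
          rwa [rdot_comb] at this
        suffices hsuf : ∃ t : ℝ, 0 ≤ t ∧ ∀ h ∈ H, t * (zdot h a : ℝ) ≤ rdot h x by
          obtain ⟨t, ht0, ht⟩ := hsuf
          refine ⟨t, ht0, (hH _).2 fun h hh => ?_⟩
          rw [rdot_sub_smul]
          linarith [ht h hh]
        set P := H.filter (fun h => 0 < zdot h a) with hPdef
        by_cases hPne : P.Nonempty
        · obtain ⟨h₀, h₀P, h₀min⟩ := P.exists_min_image (fun h => rdot h x / (zdot h a : ℝ)) hPne
          have h₀H : h₀ ∈ H := (Finset.mem_filter.1 h₀P).1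
          have h₀pos : 0 < zdot h₀ a := (Finset.mem_filter.1 h₀P).2
          have s₀pos : (0:ℝ) < (zdot h₀ a : ℝ) := by exact_mod_cast h₀pos
          refine ⟨rdot h₀ x / (zdot h₀ a : ℝ),
            div_nonneg (hx0 h₀ h₀H h₀pos.le) s₀pos.le, ?_⟩
          intro h hh
          rcases lt_trichotomy (zdot h a) 0 with hneg | hzero | hpos
          · have sneg : ((zdot h a : ℤ) : ℝ) < 0 := by exact_mod_cast hneg
            have hp := hxpair h hh h₀ h₀H hneg h₀pos
            rw [div_mul_eq_mul_div, div_le_iff₀ s₀pos]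
            nlinarith
          · rw [hzero]
            simpa using hx0 h hh hzero.ge
          · have hhP : h ∈ P := Finset.mem_filter.2 ⟨hh, hpos⟩
            have spos : (0:ℝ) < (zdot h a : ℝ) := by exact_mod_cast hpos
            exact (le_div_iff₀ spos).1 (h₀min h hhP)
        · have hnopos : ∀ h ∈ H, zdot h a ≤ 0 := fun h hh =>
            not_lt.1 fun hc => hPne ⟨h, Finset.mem_filter.2 ⟨hh, hc⟩⟩
          set N := H.filter (fun h => zdot h a < 0) with hNdef
          by_cases hNne : N.Nonempty
          · obtain ⟨g₀, g₀N, g₀max⟩ := N.exists_max_image (fun h => rdot h x / (zdot h a : ℝ)) hNne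
            refine ⟨max (rdot g₀ x / (zdot g₀ a : ℝ)) 0, le_max_right _ _, ?_⟩
            intro h hh
            rcases lt_trichotomy (zdot h a) 0 with hneg | hzero | hpos
            · have sneg : ((zdot h a : ℤ) : ℝ) < 0 := by exact_mod_cast hneg
              have h1 : rdot h x / (zdot h a : ℝ) ≤ max (rdot g₀ x / (zdot g₀ a : ℝ)) 0 :=
                le_trans (g₀max h (Finset.mem_filter.2 ⟨hh, hneg⟩)) (le_max_left _ _)
              have h2 := mul_le_mul_of_nonpos_right h1 sneg.le
              rwa [div_mul_cancel₀ _ (ne_of_lt sneg)] at h2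
            · rw [hzero]
              simpa using hx0 h hh hzero.ge
            · exact absurd hpos (not_lt.2 (hnopos h hh))
          · refine ⟨0, le_refl 0, ?_⟩
            intro h hh
            have hz : zdot h a = 0 := le_antisymm (hnopos h hh)
              (not_lt.1 fun hc => hNne ⟨h, Finset.mem_filter.2 ⟨hh, hc⟩⟩)
            rw [hz]
            simpa using hx0 h hh hz.ge


lemma mem_coneList_ofFn : ∀ (m : ℕ) (f : Fin m → (Fin d → ℤ)) (x : Fin d → ℝ),
    x ∈ coneList (List.ofFn f) ↔
      ∃ lam : Fin m → ℝ, (∀ j, 0 ≤ lam j) ∧ x = ∑ j, lam j • castVec (f j)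
  | 0, f, x => by
      simp only [List.ofFn_zero, coneList, Set.mem_singleton_iff]
      constructor
      · rintro rfl
        exact ⟨fun j => 0, fun j => le_refl 0, by simp⟩
      · rintro ⟨lam, _, rfl⟩
        simp
  | (m + 1), f, x => by
      rw [List.ofFn_succ]
      show (∃ t : ℝ, 0 ≤ t ∧ x - t • castVec (f 0) ∈ coneList (List.ofFn fun i => f i.succ)) ↔ _
      constructor
      · rintro ⟨t, ht, hmem⟩
        obtain ⟨lam', hlam', heq⟩ := (mem_coneList_ofFn m (fun i => f i.succ) _).1 hmem
        refine ⟨Fin.cons t lam', ?_, ?_⟩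
        · intro j
          refine Fin.cases ?_ ?_ j
          · simpa using ht
          · intro i; simpa using hlam' i
        · rw [Fin.sum_univ_succ]
          simp only [Fin.cons_zero, Fin.cons_succ]
          rw [← heq]
          abel
      · rintro ⟨lam, hlam, rfl⟩
        refine ⟨lam 0, hlam 0, (mem_coneList_ofFn m (fun i => f i.succ) _).2
          ⟨fun i => lam i.succ, fun i => hlam i.succ, ?_⟩⟩
        rw [Fin.sum_univ_succ]
        abel

theorem exists_halfspaces_coneRA {n : ℕ} (A : Matrix (Fin d) (Fin n) ℤ) :
    ∃ H : Finset (Fin d → ℤ), ∀ x, x ∈ coneRA A ↔ ∀ h ∈ H, 0 ≤ rdot h x := by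
  obtain ⟨H, hH⟩ := exists_halfspaces (List.ofFn fun j => matCol A j)
  refine ⟨H, fun x => ?_⟩
  rw [← hH x, mem_coneList_ofFn]
  exact Iff.rfl

lemma semigroup_cast_mem {n : ℕ} (A : Matrix (Fin d) (Fin n) ℤ) {v : Fin d → ℤ}
    (hv : v ∈ semigroupNA A) : castVec v ∈ coneRA A := by
  obtain ⟨c, rfl⟩ := hv
  refine ⟨fun j => (c j : ℝ), fun j => by positivity, ?_⟩
  funext i
  simp only [castVec, Finset.sum_apply, Pi.smul_apply, matCol]
  simp only [nsmul_eq_mul]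
  push_cast
  rfl


noncomputable def cdot (h : Fin d → ℤ) (β : Fin d → ℂ) : ℂ := ∑ i, (h i : ℂ) * β i

noncomputable def linPoly (h : Fin d → ℤ) : MvPolynomial (Fin d) ℂ :=
  ∑ i, MvPolynomial.C ((h i : ℤ) : ℂ) * MvPolynomial.X i

lemma eval_linPoly (h : Fin d → ℤ) (β : Fin d → ℂ) :
    MvPolynomial.eval β (linPoly h) = cdot h β := by
  simp [linPoly, cdot]

lemma cdot_castVec (h w : Fin d → ℤ) : cdot h (fun i => (w i : ℂ)) = ((zdot h w : ℤ) : ℂ) := by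
  simp [cdot, zdot]


end SResAux

open SResAux

/-- if `ℕA` is saturated then `ℕA ∩ sRes(A) = ∅`; in particular
`0 ∉ sRes(A)`. -/
theorem saturated_semigroup_disjoint_sRes
    {d n : ℕ} (A : Matrix (Fin d) (Fin n) ℤ)
    (hfull : IsFull A) (hpointed : IsPointed A) (hcols : ∀ j, matCol A j ≠ 0)
    (hsat : IsSaturated A) :
    (∀ v ∈ semigroupNA A, (fun i => (v i : ℂ)) ∉ sRes A) ∧
    (0 : Fin d → ℂ) ∉ sRes A := by
  classical
  obtain ⟨H, hH⟩ := exists_halfspaces_coneRA A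
  have hconeZ : ∀ {w : Fin d → ℤ}, w ∈ semigroupNA A → ∀ h ∈ H, 0 ≤ zdot h w := by
    intro w hw h hh
    have := (hH _).1 (semigroup_cast_mem A hw) h hh
    rw [rdot_castVec] at this
    exact_mod_cast this
  have part1 : ∀ v ∈ semigroupNA A, (fun i => (v i : ℂ)) ∉ sRes A := by
    intro v hv hmem
    obtain ⟨j, k, γ, hγq, heq⟩ := hmem
    set aj := matCol A j with hajdef
    have hγ : ∀ i, γ i = (v i : ℂ) + ((k : ℂ) + 1) * (A i j : ℂ) := by
      intro i
      have h1 := congrFun heq i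
      linear_combination -h1
    -- separation of the true degrees
    have tdeg_sep : ∀ b ∈ tdegSlice A j, ∃ h ∈ H, 0 ≤ zdot h b ∧ zdot h b < zdot h aj := by
      intro b hb
      obtain ⟨hbNA, hbneg⟩ := hb
      obtain ⟨c, hc⟩ := hbNA
      have hint : ∃ c' : Fin n → ℤ, b - aj = ∑ j', c' j' • matCol A j' := by
        refine ⟨fun j' => (c j' : ℤ) - (if j' = j then 1 else 0), ?_⟩
        have : ∑ j', ((c j' : ℤ) - (if j' = j then 1 else 0)) • matCol A j'
            = (∑ j', (c j' : ℤ) • matCol A j') - ∑ j', (if j' = j then (1:ℤ) else 0) • matCol A j' := by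
          rw [← Finset.sum_sub_distrib]
          exact Finset.sum_congr rfl fun j' _ => sub_smul _ _ _
        rw [this]
        have h2 : ∑ j', (if j' = j then (1:ℤ) else 0) • matCol A j' = aj := by
          simp [ite_smul, hajdef]
        have h3 : ∑ j', (c j' : ℤ) • matCol A j' = b := by
          rw [hc]
          exact Finset.sum_congr rfl fun j' _ => natCast_zsmul _ _
        rw [h2, h3]
      have hnotcone : castVec (b - aj) ∉ coneRA A := by
        intro hc2
        exact hbneg ((hsat (b - aj)).2 ⟨hint, hc2⟩)
      rw [hH] at hnotcone
      push_neg at hnotcone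
      obtain ⟨h, hhH, hlt⟩ := hnotcone
      rw [rdot_castVec] at hlt
      have hlt' : zdot h (b - aj) < 0 := by exact_mod_cast hlt
      rw [zdot_sub] at hlt'
      exact ⟨h, hhH, hconeZ ⟨c, hc⟩ h hhH, by linarith⟩
    -- the polynomial
    set p : MvPolynomial (Fin d) ℂ := ∏ h ∈ H, ∏ m ∈ Finset.range (zdot h aj).toNat,
      (linPoly h - MvPolynomial.C (m : ℂ)) with hpdef
    have heval : ∀ β : Fin d → ℂ, MvPolynomial.eval β p
        = ∏ h ∈ H, ∏ m ∈ Finset.range (zdot h aj).toNat, (cdot h β - (m : ℂ)) := by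
      intro β
      rw [hpdef, map_prod]
      refine Finset.prod_congr rfl fun h _ => ?_
      rw [map_prod]
      exact Finset.prod_congr rfl fun m _ => by rw [map_sub, eval_linPoly, MvPolynomial.eval_C]
    have hvanish : ∀ b ∈ tdegSlice A j, MvPolynomial.eval (fun i => (b i : ℂ)) p = 0 := by
      intro b hb
      obtain ⟨h, hhH, hb0, hblt⟩ := tdeg_sep b hb
      rw [heval]
      apply Finset.prod_eq_zero hhH
      have hajpos : 0 < zdot h aj := lt_of_le_of_lt hb0 hblt
      have hmem : (zdot h b).toNat ∈ Finset.range (zdot h aj).toNat :=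
        Finset.mem_range.2 ((Int.toNat_lt_toNat hajpos).2 hblt)
      apply Finset.prod_eq_zero hmem
      rw [cdot_castVec]
      rw [sub_eq_zero]
      norm_cast
      exact (Int.toNat_of_nonneg hb0).symm
    have hzero := hγq p hvanish
    -- but eval γ p ≠ 0
    have hcd : ∀ h : Fin d → ℤ, cdot h γ = ((zdot h v + ((k : ℤ) + 1) * zdot h aj : ℤ) : ℂ) := by
      intro h
      have : cdot h γ = ∑ i, ((h i : ℂ) * (v i : ℂ) + ((k : ℂ) + 1) * ((h i : ℂ) * (A i j : ℂ))) := by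
        rw [cdot]
        refine Finset.sum_congr rfl fun i _ => ?_
        rw [hγ i]
        ring
      rw [this, Finset.sum_add_distrib, ← Finset.mul_sum]
      push_cast [zdot, hajdef, matCol]
      ring
    have hne : MvPolynomial.eval γ p ≠ 0 := by
      rw [heval]
      rw [Finset.prod_ne_zero_iff]
      intro h hhH
      rw [Finset.prod_ne_zero_iff]
      intro m hm
      rw [hcd h]
      rw [Finset.mem_range] at hm
      have hmaj : (m : ℤ) < zdot h aj := Int.lt_toNat.1 hm
      have hv0 : 0 ≤ zdot h v := hconeZ hv h hhH
      have hpos : (m : ℤ) < zdot h v + ((k : ℤ) + 1) * zdot h aj := by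
        have hk : (0 : ℤ) ≤ (k : ℤ) := Int.natCast_nonneg k
        nlinarith
      have : ((m : ℤ) : ℂ) ≠ ((zdot h v + ((k : ℤ) + 1) * zdot h aj : ℤ) : ℂ) := by
        exact_mod_cast ne_of_lt hpos
      intro hcontra
      rw [sub_eq_zero] at hcontra
      push_cast at hcontra this
      exact this hcontra.symm
    exact hne hzero
  refine ⟨part1, ?_⟩
  have h0NA : (0 : Fin d → ℤ) ∈ semigroupNA A := ⟨fun _ => 0, by simp⟩
  have := part1 0 h0NA
  rw [show (fun i => ((0 : Fin d → ℤ) i : ℂ)) = 0 from by funext i; simp] at this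
  exact this
end

section
/- Let a, b ∈ ℂ and let c ∈ ℂ not be a nonpositive integer. The Gauss hypergeometric series F(z) = ∑_{n=0}^∞ ([a]_n [b]_n / [c]_n) · zⁿ/n! converges for every z ∈ ℂ with |z| < 1, and the holomorphic function F it defines satisfies, for every z with 0 < |z| < 1, the Gauss hypergeometric differential equation F''(z) + ((c − (a+b+1)z)/(z(1−z)))·F'(z) = (ab/(z(1−z)))·F(z). -/
open Filter Topology

/-- The ascending factorial `[x]_n = x(x+1)⋯(x+n−1)`. -/
noncomputable def ascFac (x : ℂ) (n : ℕ) : ℂ := ∏ k ∈ Finset.range n, (x + k)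

lemma ascFac_succ (x : ℂ) (n : ℕ) : ascFac x (n + 1) = ascFac x n * (x + n) :=
  Finset.prod_range_succ _ _

noncomputable def hgq (a b c : ℂ) (n : ℕ) : ℂ :=
  ascFac a n * ascFac b n / (ascFac c n * n.factorial)

lemma hcadd (c : ℂ) (hc : ∀ m : ℕ, c ≠ -(m : ℂ)) (n : ℕ) : ((n : ℂ) + c) ≠ 0 := by
  intro h
  exact hc n (by linear_combination h)

lemma ascFacc_ne (c : ℂ) (hc : ∀ m : ℕ, c ≠ -(m : ℂ)) (n : ℕ) : ascFac c n ≠ 0 := by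
  unfold ascFac
  rw [Finset.prod_ne_zero_iff]
  intro k _ h
  exact hc k (by linear_combination h)

lemma hgq_rec (a b c : ℂ) (hc : ∀ m : ℕ, c ≠ -(m : ℂ)) (n : ℕ) :
    ((n : ℂ) + 1) * ((n : ℂ) + c) * hgq a b c (n + 1)
      = ((n : ℂ) + a) * ((n : ℂ) + b) * hgq a b c n := by
  unfold hgq
  rw [ascFac_succ, ascFac_succ, ascFac_succ, Nat.factorial_succ]
  have h1 : ((n : ℂ) + 1) ≠ 0 := Nat.cast_add_one_ne_zero n
  have h2 := hcadd c hc n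
  have h3 := ascFacc_ne c hc n
  have h4 : ((n.factorial : ℕ) : ℂ) ≠ 0 := Nat.cast_ne_zero.mpr n.factorial_ne_zero
  have h2' : c + (n : ℂ) ≠ 0 := by simpa [add_comm] using h2
  rw [mul_div_assoc', mul_div_assoc',
    div_eq_div_iff (by push_cast; exact mul_ne_zero (mul_ne_zero h3 h2') (mul_ne_zero h1 h4))
      (mul_ne_zero h3 h4)]
  push_cast
  ring
lemma tend_div (x y : ℂ) (hy : ∀ n : ℕ, ((n : ℂ) + y) ≠ 0) :
    Tendsto (fun n : ℕ => ((n : ℂ) + x) / ((n : ℂ) + y)) atTop (𝓝 1) := by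
  have hnorm : Tendsto (fun n : ℕ => ‖(n : ℂ) + y‖) atTop atTop := by
    apply tendsto_atTop_mono (fun n => ?_)
      (tendsto_atTop_add_const_right atTop (-‖y‖) tendsto_natCast_atTop_atTop)
    have h2 : ‖(n : ℂ)‖ ≤ ‖(n : ℂ) + y‖ + ‖-y‖ := by
      calc ‖(n : ℂ)‖ = ‖((n : ℂ) + y) + (-y)‖ := by rw [add_neg_cancel_right]
        _ ≤ _ := norm_add_le _ _
    have h1 : ‖(n : ℂ)‖ = (n : ℝ) := by simp
    rw [norm_neg] at h2
    rw [h1] at h2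
    linarith
  have hz : Tendsto (fun n : ℕ => (x - y) / ((n : ℂ) + y)) atTop (𝓝 0) := by
    rw [tendsto_zero_iff_norm_tendsto_zero]
    simp only [norm_div]
    exact Tendsto.div_atTop tendsto_const_nhds hnorm
  have h := (tendsto_const_nhds (x := (1 : ℂ)) (f := atTop (α := ℕ))).add hz
  rw [add_zero] at h
  refine h.congr fun n => ?_
  rw [eq_div_iff (hy n), add_mul, div_mul_cancel₀ _ (hy n)]
  ring
lemma tend_ratio_pow (m : ℕ) :
    Tendsto (fun n : ℕ => (((n : ℝ) + 2) / ((n : ℝ) + 1)) ^ m) atTop (𝓝 1) := by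
  have h : Tendsto (fun n : ℕ => ((n : ℝ) + 2) / ((n : ℝ) + 1)) atTop (𝓝 1) := by
    have hat : Tendsto (fun n : ℕ => (n : ℝ) + 1) atTop atTop :=
      tendsto_atTop_add_const_right atTop 1 tendsto_natCast_atTop_atTop
    have h0 := (tendsto_const_nhds (x := (1 : ℝ)) (f := atTop (α := ℕ))).add
      hat.inv_tendsto_atTop
    rw [add_zero] at h0
    refine h0.congr fun n => ?_
    have hne : ((n : ℝ) + 1) ≠ 0 := by positivity
    simp only [Pi.inv_apply]
    rw [eq_div_iff hne, add_mul, inv_mul_cancel₀ hne]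
    ring
  have := h.pow m
  simpa using this

lemma master0 (a b c : ℂ) (hc : ∀ m : ℕ, c ≠ -(m : ℂ)) (m : ℕ) (t : ℝ)
    (h0 : 0 ≤ t) (h1 : t < 1) :
    Summable fun n : ℕ => ((n : ℝ) + 1) ^ m * ‖hgq a b c n‖ * t ^ n := by
  by_cases hvan : ∃ N, hgq a b c N = 0
  · obtain ⟨N, hN⟩ := hvan
    apply summable_of_ne_finset_zero (s := Finset.range (N + 1))
    intro n hn
    have hn' : N ≤ n := by
      simp only [Finset.mem_range, not_lt] at hn
      omega
    have hq : hgq a b c n = 0 := by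
      clear hn
      induction n, hn' using Nat.le_induction with
      | base => exact hN
      | succ n hn ih =>
        have h := hgq_rec a b c hc n
        rw [ih, mul_zero] at h
        have hne : ((n : ℂ) + 1) * ((n : ℂ) + c) ≠ 0 :=
          mul_ne_zero (Nat.cast_add_one_ne_zero n) (hcadd c hc n)
        exact (mul_eq_zero.mp h).resolve_left hne
    simp [hq]
  · push_neg at hvan
    rcases eq_or_lt_of_le h0 with rfl | ht0
    · apply summable_of_ne_finset_zero (s := Finset.range 1)
      intro n hn
      have : n ≠ 0 := by simpa using hn
      simp [zero_pow this]
    · have hfpos : ∀ n : ℕ, 0 < ((n : ℝ) + 1) ^ m * ‖hgq a b c n‖ * t ^ n := by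
        intro n
        have h := norm_pos_iff.mpr (hvan n)
        positivity
      apply summable_of_ratio_test_tendsto_lt_one h1
        (Eventually.of_forall fun n => (hfpos n).ne')
      have hq1 : Tendsto (fun n : ℕ => ‖hgq a b c (n + 1)‖ / ‖hgq a b c n‖) atTop (𝓝 1) := by
        have heq : ∀ n : ℕ, ‖hgq a b c (n + 1)‖ / ‖hgq a b c n‖
            = ‖(((n : ℂ) + a) / ((n : ℂ) + 1)) * (((n : ℂ) + b) / ((n : ℂ) + c))‖ := by
          intro n
          rw [← norm_div]
          congr 1
          have hrec := hgq_rec a b c hc n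
          have h1 : ((n : ℂ) + 1) ≠ 0 := Nat.cast_add_one_ne_zero n
          have h2 := hcadd c hc n
          have h3 := hvan n
          rw [div_mul_div_comm, div_eq_div_iff h3 (mul_ne_zero h1 h2)]
          linear_combination hrec
        have hT := ((tend_div a 1 fun n => Nat.cast_add_one_ne_zero n).mul
          (tend_div b c fun n => hcadd c hc n)).norm
        rw [mul_one, norm_one] at hT
        exact hT.congr fun n => (heq n).symm
      have hratio : ∀ n : ℕ,
          ‖((n + 1 : ℕ) + 1 : ℝ) ^ m * ‖hgq a b c (n + 1)‖ * t ^ (n + 1)‖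
            / ‖((n : ℝ) + 1) ^ m * ‖hgq a b c n‖ * t ^ n‖
          = (((n : ℝ) + 2) / ((n : ℝ) + 1)) ^ m * (‖hgq a b c (n + 1)‖ / ‖hgq a b c n‖) * t := by
        intro n
        rw [Real.norm_of_nonneg (hfpos (n + 1)).le, Real.norm_of_nonneg (hfpos n).le]
        have h1 : ((n : ℝ) + 1) ≠ 0 := by positivity
        have h2 : ‖hgq a b c n‖ ≠ 0 := norm_ne_zero_iff.mpr (hvan n)
        have h3 : (t : ℝ) ^ n ≠ 0 := pow_ne_zero n ht0.ne'
        push_cast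
        rw [div_pow]
        rw [div_eq_iff (by exact mul_ne_zero (mul_ne_zero (pow_ne_zero m h1) h2) h3)]
        field_simp
        ring
      have hmain : Tendsto
          (fun n : ℕ => (((n : ℝ) + 2) / ((n : ℝ) + 1)) ^ m
            * (‖hgq a b c (n + 1)‖ / ‖hgq a b c n‖) * t) atTop (𝓝 t) := by
        have := ((tend_ratio_pow m).mul hq1).mul_const t
        simpa using this
      exact hmain.congr fun n => (hratio n).symm
lemma masterj (a b c : ℂ) (hc : ∀ m : ℕ, c ≠ -(m : ℂ)) (j m : ℕ) (t : ℝ)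
    (h0 : 0 ≤ t) (h1 : t < 1) :
    Summable fun n : ℕ => ((n : ℝ) + 1) ^ m * ‖hgq a b c (n + j)‖ * t ^ n := by
  set ρ : ℝ := max t (1 / 2) with hρ
  have hρ0 : (0 : ℝ) ≤ ρ := le_max_of_le_right (by norm_num)
  have hρhalf : (1 / 2 : ℝ) ≤ ρ := le_max_right _ _
  have hρ1 : ρ < 1 := max_lt h1 (by norm_num)
  have htρ : t ≤ ρ := le_max_left _ _
  have H := ((summable_nat_add_iff j).mpr (master0 a b c hc m ρ hρ0 hρ1)).mul_left ((2:ℝ) ^ j)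
  apply H.of_nonneg_of_le (fun n => by positivity)
  intro n
  have hb1 : ((n : ℝ) + 1) ^ m ≤ (((n + j : ℕ) : ℝ) + 1) ^ m := by
    apply pow_le_pow_left₀ (by positivity)
    push_cast
    linarith [Nat.cast_nonneg (α := ℝ) j]
  have hb2 : t ^ n ≤ (2:ℝ) ^ j * ρ ^ (n + j) := by
    have e1 : t ^ n ≤ ρ ^ n := pow_le_pow_left₀ h0 htρ n
    have e2 : (1 : ℝ) ≤ (2 * ρ) ^ j := one_le_pow₀ (by linarith)
    have e3 : (2:ℝ) ^ j * ρ ^ (n + j) = ρ ^ n * (2 * ρ) ^ j := by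
      rw [pow_add, mul_pow]; ring
    rw [e3]
    nlinarith [pow_nonneg hρ0 n]
  calc ((n : ℝ) + 1) ^ m * ‖hgq a b c (n + j)‖ * t ^ n
      ≤ (((n + j : ℕ) : ℝ) + 1) ^ m * ‖hgq a b c (n + j)‖ * ((2:ℝ) ^ j * ρ ^ (n + j)) := by
        apply mul_le_mul (mul_le_mul hb1 le_rfl (norm_nonneg _) (by positivity)) hb2
          (by positivity) (by positivity)
    _ = (2:ℝ) ^ j * ((((n + j : ℕ) : ℝ) + 1) ^ m * ‖hgq a b c (n + j)‖ * ρ ^ (n + j)) := by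
        ring

lemma summable_g (a b c : ℂ) (hc : ∀ m : ℕ, c ≠ -(m : ℂ)) (j m : ℕ) (C : ℝ) (g : ℕ → ℂ)
    (hg : ∀ n, ‖g n‖ ≤ C * ((n : ℝ) + 1) ^ m * ‖hgq a b c (n + j)‖) (z : ℂ) (hz : ‖z‖ < 1) :
    Summable fun n : ℕ => g n * z ^ n := by
  apply Summable.of_norm_bounded
    ((masterj a b c hc j m ‖z‖ (norm_nonneg z) hz).mul_left C)
  intro n
  rw [norm_mul, norm_pow]
  calc ‖g n‖ * ‖z‖ ^ n ≤ C * ((n : ℝ) + 1) ^ m * ‖hgq a b c (n + j)‖ * ‖z‖ ^ n :=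
        mul_le_mul_of_nonneg_right (hg n) (by positivity)
    _ = C * (((n : ℝ) + 1) ^ m * ‖hgq a b c (n + j)‖ * ‖z‖ ^ n) := by ring
lemma hasDerivAt_qsum (a b c : ℂ) (hc : ∀ m : ℕ, c ≠ -(m : ℂ)) (j m : ℕ) (C : ℝ)
    (hC : 0 ≤ C) (g : ℕ → ℂ)
    (hg : ∀ n, ‖g n‖ ≤ C * ((n : ℝ) + 1) ^ m * ‖hgq a b c (n + j)‖) (z : ℂ) (hz : ‖z‖ < 1) :
    HasDerivAt (fun w : ℂ => ∑' n : ℕ, g n * w ^ n)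
      (∑' n : ℕ, (g (n + 1) * ((n : ℂ) + 1)) * z ^ n) z := by
  set r : ℝ := (1 + ‖z‖) / 2 with hr
  have h0z : (0 : ℝ) ≤ ‖z‖ := norm_nonneg z
  have hzr : ‖z‖ < r := by rw [hr]; linarith
  have hr1 : r < 1 := by rw [hr]; linarith
  have h0r : (0 : ℝ) ≤ r := by rw [hr]; linarith
  have hrhalf : (1 / 2 : ℝ) ≤ r := by rw [hr]; linarith
  set u : ℕ → ℝ := fun n => (2 * C) * (((n : ℝ) + 1) ^ (m + 1) * ‖hgq a b c (n + j)‖ * r ^ n)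
    with hu_def
  have hu : Summable u := (masterj a b c hc j (m + 1) r h0r hr1).mul_left _
  have hzt : z ∈ Metric.ball (0 : ℂ) r := mem_ball_zero_iff.mpr hzr
  have hbound : ∀ (n : ℕ) (y : ℂ), y ∈ Metric.ball (0 : ℂ) r →
      ‖g n * ((n : ℂ) * y ^ (n - 1))‖ ≤ u n := by
    intro n y hy
    have hy' : ‖y‖ ≤ r := (mem_ball_zero_iff.mp hy).le
    rw [norm_mul, norm_mul, norm_pow, Complex.norm_natCast]
    have h1 : ‖y‖ ^ (n - 1) ≤ r ^ (n - 1) := pow_le_pow_left₀ (norm_nonneg y) hy' _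
    have h2 : r ^ (n - 1) ≤ 2 * r ^ n := by
      cases n with
      | zero => simp
      | succ k =>
        simp only [Nat.add_sub_cancel, pow_succ]
        nlinarith [pow_nonneg h0r k]
    have h3 : (n : ℝ) ≤ (n : ℝ) + 1 := by linarith
    have h4 := hg n
    have h5 : (0:ℝ) ≤ C * ((n : ℝ) + 1) ^ m * ‖hgq a b c (n + j)‖ := by positivity
    calc ‖g n‖ * ((n : ℝ) * ‖y‖ ^ (n - 1))
        ≤ (C * ((n : ℝ) + 1) ^ m * ‖hgq a b c (n + j)‖) * (((n : ℝ) + 1) * (2 * r ^ n)) := by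
          apply mul_le_mul h4 ?_ (by positivity) h5
          exact mul_le_mul h3 (h1.trans h2) (by positivity) (by positivity)
      _ = u n := by rw [hu_def]; dsimp only; rw [pow_succ]; ring
  have hderiv : ∀ (n : ℕ) (y : ℂ), y ∈ Metric.ball (0 : ℂ) r →
      HasDerivAt (fun w : ℂ => g n * w ^ n) (g n * ((n : ℂ) * y ^ (n - 1))) y :=
    fun n y _ => (hasDerivAt_pow n y).const_mul (g n)
  have hsum0 : Summable fun n : ℕ => g n * z ^ n := summable_g a b c hc j m C g hg z hz
  have H := hasDerivAt_tsum_of_isPreconnected hu Metric.isOpen_ball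
    (convex_ball (0:ℂ) r).isPreconnected hderiv hbound hzt hsum0 hzt
  have hsum' : Summable fun n : ℕ => g n * ((n : ℂ) * z ^ (n - 1)) :=
    Summable.of_norm_bounded hu fun n => hbound n z hzt
  have hval : (∑' n : ℕ, g n * ((n : ℂ) * z ^ (n - 1)))
      = ∑' n : ℕ, (g (n + 1) * ((n : ℂ) + 1)) * z ^ n := by
    rw [Summable.tsum_eq_zero_add hsum']
    simp only [Nat.cast_zero, zero_mul, mul_zero, zero_add, Nat.add_sub_cancel]
    exact tsum_congr fun n => by push_cast; ring
  rw [← hval]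
  exact H
lemma zmul {z : ℂ} (f h : ℕ → ℂ) (hh : Summable h) (h0 : h 0 = 0)
    (hstep : ∀ n, h (n + 1) = z * f n) : z * ∑' n : ℕ, f n = ∑' n : ℕ, h n := by
  rw [← tsum_mul_left, Summable.tsum_eq_zero_add hh, h0, zero_add]
  exact tsum_congr fun n => (hstep n).symm

/-- the Gauss hypergeometric series
`F(z) = ∑ₙ ([a]_n[b]_n/[c]_n)·zⁿ/n!` converges on the open unit disk, defines a holomorphic
function there, and satisfies the Gauss hypergeometric differential equation
`F'' + ((c−(a+b+1)z)/(z(1−z)))·F' = (ab/(z(1−z)))·F` for `0 < |z| < 1`. -/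
theorem gauss_hypergeometric_series_solves_gauss_equation
    (a b c : ℂ) (hc : ∀ m : ℕ, c ≠ -(m : ℂ)) :
    (∀ z : ℂ, ‖z‖ < 1 →
      Summable fun n : ℕ => ascFac a n * ascFac b n / ascFac c n * z ^ n / (n.factorial : ℂ)) ∧
    (∀ z : ℂ, ‖z‖ < 1 → AnalyticAt ℂ
      (fun w : ℂ =>
        ∑' n : ℕ, ascFac a n * ascFac b n / ascFac c n * w ^ n / (n.factorial : ℂ)) z) ∧
    (∀ z : ℂ, 0 < ‖z‖ → ‖z‖ < 1 →
      deriv (deriv (fun w : ℂ =>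
          ∑' n : ℕ, ascFac a n * ascFac b n / ascFac c n * w ^ n / (n.factorial : ℂ))) z
        + (c - (a + b + 1) * z) / (z * (1 - z)) *
          deriv (fun w : ℂ =>
            ∑' n : ℕ, ascFac a n * ascFac b n / ascFac c n * w ^ n / (n.factorial : ℂ)) z
        = a * b / (z * (1 - z)) *
          ∑' n : ℕ, ascFac a n * ascFac b n / ascFac c n * z ^ n / (n.factorial : ℂ)) := by
  have hFun : (fun w : ℂ =>
      ∑' n : ℕ, ascFac a n * ascFac b n / ascFac c n * w ^ n / (n.factorial : ℂ))
      = fun w : ℂ => ∑' n : ℕ, hgq a b c n * w ^ n := by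
    funext w
    exact tsum_congr fun n => by unfold hgq; ring
  -- coefficient bounds
  have hg0 : ∀ n : ℕ, ‖hgq a b c n‖ ≤ 1 * ((n : ℝ) + 1) ^ 0 * ‖hgq a b c (n + 0)‖ := by
    intro n; simp
  have hnorm_nat : ∀ n : ℕ, ‖((n : ℂ) + 1)‖ = (n : ℝ) + 1 := by
    intro n
    rw [show ((n : ℂ) + 1) = ((n + 1 : ℕ) : ℂ) by push_cast; ring, Complex.norm_natCast]
    push_cast; ring
  have hg1 : ∀ n : ℕ, ‖hgq a b c (n + 1) * ((n : ℂ) + 1)‖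
      ≤ 1 * ((n : ℝ) + 1) ^ 1 * ‖hgq a b c (n + 1)‖ := by
    intro n
    rw [norm_mul, hnorm_nat]
    apply le_of_eq
    ring
  have hD1 : ∀ w : ℂ, ‖w‖ < 1 → HasDerivAt (fun w : ℂ => ∑' n : ℕ, hgq a b c n * w ^ n)
      (∑' n : ℕ, (hgq a b c (n + 1) * ((n : ℂ) + 1)) * w ^ n) w :=
    fun w hw => hasDerivAt_qsum a b c hc 0 0 1 zero_le_one _ hg0 w hw
  refine ⟨?_, ?_, ?_⟩
  · intro z hz
    apply (summable_g a b c hc 0 0 1 _ hg0 z hz).congr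
    intro n
    unfold hgq
    ring
  · intro z hz
    rw [hFun]
    have hdiff : DifferentiableOn ℂ (fun w : ℂ => ∑' n : ℕ, hgq a b c n * w ^ n)
        (Metric.ball 0 1) := fun w hw =>
      ((hD1 w (by simpa [mem_ball_zero_iff] using hw)).differentiableAt).differentiableWithinAt
    exact hdiff.analyticAt (Metric.isOpen_ball.mem_nhds (mem_ball_zero_iff.mpr hz))
  · intro z hz0 hz1
    have hzne : z ≠ 0 := norm_pos_iff.mp hz0
    have h1z : (1 : ℂ) - z ≠ 0 := by
      intro h
      have : (1 : ℂ) = z := by linear_combination h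
      rw [← this] at hz1
      simp at hz1
    set F1 : ℂ → ℂ := fun w => ∑' n : ℕ, (hgq a b c (n + 1) * ((n : ℂ) + 1)) * w ^ n with hF1d
    set F2 : ℂ → ℂ :=
      fun w => ∑' n : ℕ, ((hgq a b c (n + 2) * ((n : ℂ) + 2)) * ((n : ℂ) + 1)) * w ^ n with hF2d
    have hD2 : ∀ w : ℂ, ‖w‖ < 1 → HasDerivAt F1 (F2 w) w := by
      intro w hw
      have h := hasDerivAt_qsum a b c hc 1 1 1 zero_le_one
        (fun n => hgq a b c (n + 1) * ((n : ℂ) + 1)) hg1 w hw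
      have heq : (∑' n : ℕ, ((hgq a b c (n + 1 + 1) * (((n + 1 : ℕ) : ℂ) + 1)) * ((n : ℂ) + 1))
          * w ^ n) = F2 w := by
        rw [hF2d]
        exact tsum_congr fun n => by push_cast; ring
      rw [hF1d]
      exact heq ▸ h
    have hzball : z ∈ Metric.ball (0 : ℂ) 1 := mem_ball_zero_iff.mpr hz1
    have hd1 : deriv (fun w : ℂ => ∑' n : ℕ, hgq a b c n * w ^ n) z = F1 z := (hD1 z hz1).deriv
    have hdd : deriv (deriv (fun w : ℂ => ∑' n : ℕ, hgq a b c n * w ^ n)) z = F2 z := by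
      have hev : deriv (fun w : ℂ => ∑' n : ℕ, hgq a b c n * w ^ n) =ᶠ[𝓝 z] F1 := by
        filter_upwards [Metric.isOpen_ball.mem_nhds hzball] with w hw
        exact (hD1 w (mem_ball_zero_iff.mp hw)).deriv
      rw [hev.deriv_eq]
      exact (hD2 z hz1).deriv
    rw [hFun, hd1, hdd]
    have hFz : (∑' n : ℕ, ascFac a n * ascFac b n / ascFac c n * z ^ n / (n.factorial : ℂ))
        = ∑' n : ℕ, hgq a b c n * z ^ n := tsum_congr fun n => by unfold hgq; ring
    rw [hFz]
    -- summability of all the auxiliary series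
    have S_F : Summable fun n : ℕ => hgq a b c n * z ^ n :=
      summable_g a b c hc 0 0 1 _ hg0 z hz1
    have S_F1 : Summable fun n : ℕ => (hgq a b c (n + 1) * ((n : ℂ) + 1)) * z ^ n :=
      summable_g a b c hc 1 1 1 _ hg1 z hz1
    have hs : Summable fun n : ℕ => (hgq a b c (n + 1) * (((n : ℂ) + 1) * (n : ℂ))) * z ^ n := by
      apply summable_g a b c hc 1 2 1 _ ?_ z hz1
      intro n
      rw [norm_mul, norm_mul, hnorm_nat, Complex.norm_natCast]
      have h1 : (n:ℝ) ≤ (n:ℝ) + 1 := by linarith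
      have h2 : (0:ℝ) ≤ ‖hgq a b c (n+1)‖ := norm_nonneg _
      nlinarith [norm_nonneg (hgq a b c (n+1))]
    have hs1 : Summable fun n : ℕ => ((n : ℂ) * hgq a b c n) * z ^ n := by
      apply summable_g a b c hc 0 1 1 _ ?_ z hz1
      intro n
      rw [norm_mul, Complex.norm_natCast]
      simp only [Nat.add_zero, pow_one, one_mul]
      have h1 : (n:ℝ) ≤ (n:ℝ) + 1 := by linarith
      nlinarith [norm_nonneg (hgq a b c n)]
    have hs2 : Summable fun n : ℕ => ((((n : ℂ) - 1) * (n : ℂ)) * hgq a b c n) * z ^ n := by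
      apply summable_g a b c hc 0 2 1 _ ?_ z hz1
      intro n
      rw [norm_mul, norm_mul, Complex.norm_natCast]
      have h1 : ‖((n : ℂ) - 1)‖ ≤ (n:ℝ) + 1 := by
        calc ‖((n : ℂ) - 1)‖ ≤ ‖(n:ℂ)‖ + ‖(1:ℂ)‖ := norm_sub_le _ _
          _ = (n:ℝ) + 1 := by simp
      have h2 : (n:ℝ) ≤ (n:ℝ) + 1 := by linarith
      simp only [Nat.add_zero, one_mul]
      have h3 : ‖((n:ℂ) - 1)‖ * (n:ℝ) ≤ ((n:ℝ) + 1) * ((n:ℝ) + 1) :=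
        mul_le_mul h1 h2 (Nat.cast_nonneg n) (by positivity)
      have h4 : ((n:ℝ) + 1) ^ 2 = ((n:ℝ) + 1) * ((n:ℝ) + 1) := by ring
      nlinarith [norm_nonneg (hgq a b c n)]
    -- the shifted tsum identities
    have e1a : z * F2 z = ∑' n : ℕ, (hgq a b c (n + 1) * (((n : ℂ) + 1) * (n : ℂ))) * z ^ n := by
      rw [hF2d]
      apply zmul _ _ hs (by simp) fun n => ?_
      push_cast
      ring
    have e2a : z * F1 z = ∑' n : ℕ, ((n : ℂ) * hgq a b c n) * z ^ n := by
      rw [hF1d]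
      apply zmul _ _ hs1 (by simp) fun n => ?_
      push_cast
      ring
    have e2b : z * (z * F2 z) = ∑' n : ℕ, ((((n : ℂ) - 1) * (n : ℂ)) * hgq a b c n) * z ^ n := by
      rw [e1a]
      apply zmul _ _ hs2 (by simp) fun n => ?_
      push_cast
      ring
    have e1 : z * F2 z + c * F1 z
        = ∑' n : ℕ, (((n : ℂ) + 1) * ((n : ℂ) + c) * hgq a b c (n + 1)) * z ^ n := by
      rw [e1a, hF1d, ← tsum_mul_left, ← Summable.tsum_add hs (S_F1.mul_left c)]
      exact tsum_congr fun n => by ring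
    have e2 : z * (z * F2 z) + (a + b + 1) * (z * F1 z) + a * b * (∑' n : ℕ, hgq a b c n * z ^ n)
        = ∑' n : ℕ, (((n : ℂ) + 1) * ((n : ℂ) + c) * hgq a b c (n + 1)) * z ^ n := by
      rw [e2b, e2a, ← tsum_mul_left, ← tsum_mul_left,
        ← Summable.tsum_add hs2 (hs1.mul_left (a + b + 1)),
        ← Summable.tsum_add (hs2.add (hs1.mul_left (a + b + 1))) (S_F.mul_left (a * b))]
      refine tsum_congr fun n => ?_
      have hr := hgq_rec a b c hc n
      linear_combination (-(z ^ n)) * hr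
    have key : z * (1 - z) * F2 z + (c - (a + b + 1) * z) * F1 z
        = a * b * (∑' n : ℕ, hgq a b c n * z ^ n) := by
      linear_combination e1 - e2
    have hD : z * (1 - z) ≠ 0 := mul_ne_zero hzne h1z
    field_simp
    linear_combination key
end
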